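/- arXiv:1111.0960 — 3 statements merged into one kernel-verified Lean document; each statement's English description precedes it below -/
import Mathlib

section
/- For every integer m ≥ 1 there exist real constants C₀, …, C_{⌊(m-1)/2⌋} with C₀ ≠ 0 such that for all h ∈ (0, 1/α²), ∫₀^{2π} dt / (1 - α √h sin t)^m = (1/r^{2m-1}) Σ_{j=0}^{⌊(m-1)/2⌋} C_j r^{2j}, where r = √(1 - α² h). -/
open Real Filter Topology MeasureTheory intervalIntegral

noncomputable def Cc : ℕ → ℕ → ℝ
  | 0, _ => 0
  | 1, j => if j = 0 then 2 * π else 0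
  | 2, j => if j = 0 then 2 * π else 0
  | (n+3), j => ((2*(n:ℝ)+3) * Cc (n+2) j
      - ((n:ℝ)+1) * (if j = 0 then 0 else Cc (n+1) (j-1))) / ((n:ℝ)+2)

lemma Cc_pos : ∀ n, 1 ≤ n → 0 < Cc n 0
  | 1, _ => by simp [Cc]; positivity
  | 2, _ => by simp [Cc]; positivity
  | (n+3), _ => by
      have h := Cc_pos (n+2) (by omega)
      simp only [Cc, if_pos rfl]
      have h1 : (0:ℝ) < 2*(n:ℝ)+3 := by positivity
      have h2 : (0:ℝ) < (n:ℝ)+2 := by positivity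
      rw [if_pos trivial, mul_zero, sub_zero]
      positivity

lemma Cc_eq_zero : ∀ n j, (n-1)/2 < j → Cc n j = 0
  | 0, j, _ => by simp [Cc]
  | 1, j, hj => by simp [Cc]; omega
  | 2, j, hj => by simp [Cc]; omega
  | (n+3), j, hj => by
      have hj0 : j ≠ 0 := by omega
      have h1 : Cc (n+2) j = 0 := Cc_eq_zero (n+2) j (by omega)
      have h2 : Cc (n+1) (j-1) = 0 := Cc_eq_zero (n+1) (j-1) (by omega)
      simp [Cc, if_neg hj0, h1, h2]

lemma denom_pos {b : ℝ} (hb : |b| < 1) (t : ℝ) : 0 < 1 - b * Real.sin t := by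
  have h1 : b * Real.sin t ≤ |b * Real.sin t| := le_abs_self _
  have h2 : |b * Real.sin t| ≤ |b| := by
    rw [abs_mul]
    exact mul_le_of_le_one_right (abs_nonneg b) (abs_sin_le_one t)
  linarith

lemma contk {b : ℝ} (hb : |b| < 1) (k : ℕ) :
    Continuous fun t => 1 / (1 - b * Real.sin t) ^ k := by
  apply Continuous.div continuous_const
  · exact (continuous_const.sub (continuous_const.mul Real.continuous_sin)).pow k
  · intro t
    exact pow_ne_zero _ (ne_of_gt (denom_pos hb t))

lemma one_sub_sq_pos {b : ℝ} (hb : |b| < 1) : 0 < 1 - b ^ 2 := by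
  have : b ^ 2 < 1 := by rw [← sq_abs]; exact pow_lt_one₀ (abs_nonneg b) hb (by norm_num)
  linarith

lemma integralA {b : ℝ} (hb : |b| < 1) :
    ∫ t in (0:ℝ)..(2*π), 1 / (1 - b * Real.sin t) = 2 * π / Real.sqrt (1 - b ^ 2) := by
  set r := Real.sqrt (1 - b ^ 2) with hrdef
  have hr : 0 < r := Real.sqrt_pos.2 (one_sub_sq_pos hb)
  have hr2 : r ^ 2 = 1 - b ^ 2 := Real.sq_sqrt (one_sub_sq_pos hb).le
  -- shift to [-π, π]
  have hper : Function.Periodic (fun t => 1 / (1 - b * Real.sin t)) (2 * π) := by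
    intro x; simp [Real.sin_add_two_pi]
  have hshift : ∫ t in (0:ℝ)..(2*π), 1 / (1 - b * Real.sin t)
      = ∫ t in (-π)..π, 1 / (1 - b * Real.sin t) := by
    have h2 := hper.intervalIntegral_add_eq (0:ℝ) (-π)
    rw [zero_add, show -π + 2*π = π by ring] at h2
    exact h2
  rw [hshift]
  set F : ℝ → ℝ := fun t => (2 / r) * Real.arctan ((Real.tan (t / 2) - b) / r) with hF
  have hderiv : ∀ x ∈ Set.Ioo (-π) π,
      HasDerivAt F (1 / (1 - b * Real.sin x)) x := by
    intro x hx
    have hc : 0 < Real.cos (x / 2) :=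
      Real.cos_pos_of_mem_Ioo ⟨by linarith [hx.1], by linarith [hx.2]⟩
    have h1 : HasDerivAt (fun t : ℝ => Real.tan (t / 2))
        (1 / Real.cos (x / 2) ^ 2 * (1 / 2)) x := by
      have := (Real.hasDerivAt_tan hc.ne').comp x ((hasDerivAt_id x).div_const 2)
      simp at this ⊢; exact this
    have h3 : HasDerivAt (fun t : ℝ => (Real.tan (t / 2) - b) / r)
        ((1 / Real.cos (x / 2) ^ 2 * (1 / 2)) / r) x := (h1.sub_const b).div_const r
    have h4 := (Real.hasDerivAt_arctan ((Real.tan (x / 2) - b) / r)).comp x h3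
    have h5 := h4.const_mul (2 / r)
    refine h5.congr_deriv ?_
    -- algebra
    set c := Real.cos (x / 2) with hcdef
    set s := Real.sin (x / 2) with hsdef
    have htan : Real.tan (x / 2) = s / c := Real.tan_eq_sin_div_cos _
    have hsin : Real.sin x = 2 * s * c := by
      rw [show x = 2 * (x / 2) by ring, Real.sin_two_mul]
    have hc2 : c ^ 2 = 1 - s ^ 2 := by
      have := Real.sin_sq_add_cos_sq (x / 2); linarith
    have hden : (0:ℝ) < 1 - b * Real.sin x := denom_pos hb x
    rw [hsin] at hden
    have e2 : (Real.tan (x / 2) - b) / r = (s - b * c) / (c * r) := by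
      rw [htan]; field_simp
    have e0 : c ^ 2 * r ^ 2 + (s - b * c) ^ 2 = 1 - b * (2 * s * c) := by
      linear_combination c ^ 2 * hr2 + hc2
    have e1 : 1 + ((s - b * c) / (c * r)) ^ 2 = (1 - b * (2 * s * c)) / (c ^ 2 * r ^ 2) := by
      rw [div_pow, mul_pow, ← e0]
      field_simp
    rw [hsin, e2, e1]
    have hne : (1 - b * (2 * s * c)) ≠ 0 := ne_of_gt hden
    field_simp
  have hint : IntervalIntegrable (fun t => 1 / (1 - b * Real.sin t)) volume (-π) π := by
    have := contk hb 1
    simp only [pow_one] at this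
    exact this.intervalIntegrable _ _
  have htop : Tendsto F (𝓝[<] π) (𝓝 ((2 / r) * (π / 2))) := by
    have hhalf : Tendsto (fun t : ℝ => t / 2) (𝓝[<] π) (𝓝[<] (π / 2)) := by
      apply tendsto_nhdsWithin_iff.2
      refine ⟨((continuous_id.div_const 2).continuousAt.tendsto).mono_left nhdsWithin_le_nhds, ?_⟩
      filter_upwards [self_mem_nhdsWithin] with t ht
      exact Set.mem_Iio.2 (by have := Set.mem_Iio.1 ht; linarith)
    have h_tan : Tendsto (fun t : ℝ => Real.tan (t / 2)) (𝓝[<] π) atTop :=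
      Real.tendsto_tan_pi_div_two.comp hhalf
    have h_aff : Tendsto (fun t : ℝ => (Real.tan (t / 2) - b) / r) (𝓝[<] π) atTop := by
      apply Tendsto.atTop_div_const hr
      simpa [sub_eq_add_neg] using tendsto_atTop_add_const_right _ (-b) h_tan
    have h_ar : Tendsto (fun t : ℝ => Real.arctan ((Real.tan (t / 2) - b) / r)) (𝓝[<] π)
        (𝓝 (π / 2)) :=
      (Real.tendsto_arctan_atTop.mono_right nhdsWithin_le_nhds).comp h_aff
    exact h_ar.const_mul _
  have hbot : Tendsto F (𝓝[>] (-π)) (𝓝 ((2 / r) * (-(π / 2)))) := by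
    have hhalf : Tendsto (fun t : ℝ => t / 2) (𝓝[>] (-π)) (𝓝[>] (-(π / 2))) := by
      apply tendsto_nhdsWithin_iff.2
      constructor
      · have : Tendsto (fun t : ℝ => t / 2) (𝓝 (-π)) (𝓝 (-π / 2)) :=
          (continuous_id.div_const 2).continuousAt.tendsto
        rw [show -π / 2 = -(π / 2) by ring] at this
        exact this.mono_left nhdsWithin_le_nhds
      · filter_upwards [self_mem_nhdsWithin] with t ht
        exact Set.mem_Ioi.2 (by have := Set.mem_Ioi.1 ht; linarith)
    have h_tan : Tendsto (fun t : ℝ => Real.tan (t / 2)) (𝓝[>] (-π)) atBot :=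
      Real.tendsto_tan_neg_pi_div_two.comp hhalf
    have h_aff : Tendsto (fun t : ℝ => (Real.tan (t / 2) - b) / r) (𝓝[>] (-π)) atBot := by
      apply Tendsto.atBot_div_const hr
      simpa [sub_eq_add_neg] using tendsto_atBot_add_const_right _ (-b) h_tan
    have h_ar : Tendsto (fun t : ℝ => Real.arctan ((Real.tan (t / 2) - b) / r)) (𝓝[>] (-π))
        (𝓝 (-(π / 2))) :=
      (Real.tendsto_arctan_atBot.mono_right nhdsWithin_le_nhds).comp h_aff
    exact h_ar.const_mul _
  have key := integral_eq_sub_of_hasDerivAt_of_tendsto (by linarith [Real.pi_pos] : -π < π)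
    hderiv hint hbot htop
  rw [key]
  field_simp
  ring

lemma recurrence {b : ℝ} (hb : |b| < 1) (hb0 : b ≠ 0) (n : ℕ) :
    ((n:ℝ) + 1) * (1 - b ^ 2) * (∫ t in (0:ℝ)..(2*π), 1 / (1 - b * Real.sin t) ^ (n+2))
      = (2 * (n:ℝ) + 1) * (∫ t in (0:ℝ)..(2*π), 1 / (1 - b * Real.sin t) ^ (n+1))
        - (n:ℝ) * (∫ t in (0:ℝ)..(2*π), 1 / (1 - b * Real.sin t) ^ n) := by
  set A : ℝ := -(((n:ℝ) + 1) * (1 - b ^ 2)) with hA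
  set B : ℝ := 2 * (n:ℝ) + 1 with hB
  set C : ℝ := -(n:ℝ) with hC
  set d : ℝ → ℝ := fun t => (1/b) * (A * (1 / (1 - b * Real.sin t) ^ (n+2))
      + (B * (1 / (1 - b * Real.sin t) ^ (n+1)) + C * (1 / (1 - b * Real.sin t) ^ n))) with hd
  set g : ℝ → ℝ := fun t => Real.cos t / (1 - b * Real.sin t) ^ (n+1) with hg
  have hder : ∀ x ∈ Set.uIcc (0:ℝ) (2*π), HasDerivAt g (d x) x := by
    intro x _
    have hu : (0:ℝ) < 1 - b * Real.sin x := denom_pos hb x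
    have hden : HasDerivAt (fun t : ℝ => (1 - b * Real.sin t) ^ (n+1))
        ((↑(n+1) : ℝ) * (1 - b * Real.sin x) ^ n * (-(b * Real.cos x))) x := by
      have h0 : HasDerivAt (fun t : ℝ => 1 - b * Real.sin t) (-(b * Real.cos x)) x :=
        ((Real.hasDerivAt_sin x).const_mul b).const_sub 1
      have := h0.pow (n+1)
      simp at this ⊢; exact this
    have hdiv := (Real.hasDerivAt_cos x).div hden
      (pow_ne_zero _ (ne_of_gt hu))
    refine hdiv.congr_deriv ?_
    have hCo2 : Real.cos x ^ 2 = 1 - Real.sin x ^ 2 := Real.cos_sq' x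
    have expand : (-Real.sin x * (1 - b * Real.sin x) ^ (n+1)
          - Real.cos x * ((↑(n+1) : ℝ) * (1 - b * Real.sin x) ^ n * (-(b * Real.cos x))))
        = (1 - b * Real.sin x) ^ n
            * (-Real.sin x * (1 - b * Real.sin x) + ((n:ℝ)+1) * b * (Real.cos x ^ 2)) := by
      push_cast; ring
    rw [expand, hCo2]
    rw [hd, hA, hB, hC]
    field_simp
    ring
  have hcont : Continuous d := by
    apply Continuous.mul continuous_const
    exact ((continuous_const.mul (contk hb (n+2))).add
      ((continuous_const.mul (contk hb (n+1))).add (continuous_const.mul (contk hb n))))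
  have hzero : ∫ t in (0:ℝ)..(2*π), d t = 0 := by
    rw [integral_eq_sub_of_hasDerivAt hder (hcont.intervalIntegrable _ _)]
    simp [hg, Real.sin_two_pi, Real.cos_two_pi]
  have hsplit : ∫ t in (0:ℝ)..(2*π), d t
      = (1/b) * (A * (∫ t in (0:ℝ)..(2*π), 1 / (1 - b * Real.sin t) ^ (n+2))
        + (B * (∫ t in (0:ℝ)..(2*π), 1 / (1 - b * Real.sin t) ^ (n+1))
          + C * (∫ t in (0:ℝ)..(2*π), 1 / (1 - b * Real.sin t) ^ n))) := by
    rw [hd]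
    rw [intervalIntegral.integral_const_mul]
    congr 1
    rw [integral_add (f := fun t => A * (1 / (1 - b * Real.sin t) ^ (n+2)))
      (g := fun t => B * (1 / (1 - b * Real.sin t) ^ (n+1)) + C * (1 / (1 - b * Real.sin t) ^ n))
      ((continuous_const.mul (contk hb (n+2))).intervalIntegrable _ _)
      (((continuous_const.mul (contk hb (n+1))).add
        (continuous_const.mul (contk hb n))).intervalIntegrable _ _),
      integral_add (f := fun t => B * (1 / (1 - b * Real.sin t) ^ (n+1)))
        (g := fun t => C * (1 / (1 - b * Real.sin t) ^ n))
        ((continuous_const.mul (contk hb (n+1))).intervalIntegrable _ _)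
        ((continuous_const.mul (contk hb n)).intervalIntegrable _ _),
      intervalIntegral.integral_const_mul, intervalIntegral.integral_const_mul, intervalIntegral.integral_const_mul]
  rw [hzero] at hsplit
  have h1b : (1:ℝ)/b ≠ 0 := one_div_ne_zero hb0
  have hmain := (mul_eq_zero.1 hsplit.symm).resolve_left h1b
  rw [hA, hB, hC] at hmain
  linarith

lemma mainlem {b : ℝ} (hb : |b| < 1) (hb0 : b ≠ 0) (n : ℕ) :
    (∫ t in (0:ℝ)..(2*π), 1 / (1 - b * Real.sin t) ^ (n+1))
      = (1 / Real.sqrt (1 - b ^ 2) ^ (2*n+1))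
          * ∑ j ∈ Finset.range (n+1), Cc (n+1) j * Real.sqrt (1 - b ^ 2) ^ (2*j) := by
  set r := Real.sqrt (1 - b ^ 2) with hrdef
  have hr : 0 < r := Real.sqrt_pos.2 (one_sub_sq_pos hb)
  have hr2 : r ^ 2 = 1 - b ^ 2 := Real.sq_sqrt (one_sub_sq_pos hb).le
  set J : ℕ → ℝ := fun k => ∫ t in (0:ℝ)..(2*π), 1 / (1 - b * Real.sin t) ^ k with hJ
  set P : ℕ → Prop := fun n =>
    J (n+1) = (1 / r ^ (2*n+1)) * ∑ j ∈ Finset.range (n+1), Cc (n+1) j * r ^ (2*j) with hP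
  suffices hsuff : ∀ n, P n ∧ P (n+1) from (hsuff n).1
  intro n
  have P0 : P 0 := by
    show J 1 = (1 / r ^ 1) * ∑ j ∈ Finset.range 1, Cc 1 j * r ^ (2*j)
    have h1 : J 1 = 2 * π / r := by
      rw [hJ]
      simpa using integralA hb
    rw [h1]
    simp [Cc]
    ring
  have P1 : P 1 := by
    show J 2 = (1 / r ^ (2*1+1)) * ∑ j ∈ Finset.range 2, Cc 2 j * r ^ (2*j)
    have hrec := recurrence hb hb0 0
    simp only [Nat.cast_zero] at hrec
    have hJ1 : J 1 = 2 * π / r := by rw [hJ]; simpa using integralA hb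
    have hJ2 : (1 - b^2) * J 2 = J 1 := by
      have h2 : ((0:ℝ)+1) * (1 - b^2) * J 2 = (2*(0:ℝ)+1) * J 1 - (0:ℝ) * J 0 := hrec
      linarith
    rw [← hr2] at hJ2
    have h3 : J 2 = 2 * π / r ^ 3 := by
      rw [hJ1] at hJ2
      field_simp at hJ2 ⊢
      linarith [hJ2]
    rw [h3]
    simp [Cc, Finset.sum_range_succ]
    ring
  induction n with
  | zero => exact ⟨P0, P1⟩
  | succ k ih =>
    refine ⟨ih.2, ?_⟩
    have ih1 : J (k+1) = (1 / r ^ (2*k+1)) * ∑ j ∈ Finset.range (k+1), Cc (k+1) j * r ^ (2*j) :=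
      ih.1
    have ih2 : J (k+2)
        = (1 / r ^ (2*(k+1)+1)) * ∑ j ∈ Finset.range (k+2), Cc (k+2) j * r ^ (2*j) := ih.2
    show J (k+3) = (1 / r ^ (2*(k+2)+1)) * ∑ j ∈ Finset.range (k+3), Cc (k+3) j * r ^ (2*j)
    set S3 := ∑ j ∈ Finset.range (k+3), Cc (k+3) j * r ^ (2*j) with hS3
    set S2 := ∑ j ∈ Finset.range (k+2), Cc (k+2) j * r ^ (2*j) with hS2
    set S1 := ∑ j ∈ Finset.range (k+1), Cc (k+1) j * r ^ (2*j) with hS1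
    have hcoeff : ∀ j, ((k:ℝ)+2) * Cc (k+3) j
        = (2*(k:ℝ)+3) * Cc (k+2) j - ((k:ℝ)+1) * (if j = 0 then 0 else Cc (k+1) (j-1)) := by
      intro j
      have e : Cc (k+3) j = ((2*(k:ℝ)+3) * Cc (k+2) j
          - ((k:ℝ)+1) * (if j = 0 then 0 else Cc (k+1) (j-1))) / ((k:ℝ)+2) := rfl
      rw [e]
      field_simp
    have H : ((k:ℝ)+2) * S3 = (2*(k:ℝ)+3) * S2 - ((k:ℝ)+1) * r^2 * S1 := by
      rw [hS3, Finset.mul_sum]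
      have hterm : ∀ j ∈ Finset.range (k+3), ((k:ℝ)+2) * (Cc (k+3) j * r ^ (2*j))
          = (2*(k:ℝ)+3) * (Cc (k+2) j * r ^ (2*j))
            - ((k:ℝ)+1) * ((if j = 0 then 0 else Cc (k+1) (j-1)) * r ^ (2*j)) := by
        intro j _
        linear_combination r ^ (2*j) * hcoeff j
      rw [Finset.sum_congr rfl hterm, Finset.sum_sub_distrib]
      have ha : ∑ j ∈ Finset.range (k+3), (2*(k:ℝ)+3) * (Cc (k+2) j * r ^ (2*j))
          = (2*(k:ℝ)+3) * S2 := by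
        rw [← Finset.mul_sum, hS2]
        congr 1
        rw [Finset.sum_range_succ]
        rw [Cc_eq_zero (k+2) (k+2) (by omega)]
        ring
      have hbb : ∑ j ∈ Finset.range (k+3),
            ((k:ℝ)+1) * ((if j = 0 then 0 else Cc (k+1) (j-1)) * r ^ (2*j))
          = ((k:ℝ)+1) * (r^2 * S1) := by
        rw [← Finset.mul_sum]
        congr 1
        rw [Finset.sum_range_succ']
        have hterm2 : ∀ j ∈ Finset.range (k+2),
            (if j+1 = 0 then (0:ℝ) else Cc (k+1) (j+1-1)) * r ^ (2*(j+1))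
              = r^2 * (Cc (k+1) j * r ^ (2*j)) := by
          intro j _
          rw [if_neg (Nat.succ_ne_zero j), Nat.add_sub_cancel,
            show 2*(j+1) = 2*j+2 by omega, pow_add]
          ring
        rw [Finset.sum_congr rfl hterm2]
        simp only [if_pos rfl, zero_mul, add_zero]
        rw [hS1, Finset.mul_sum, Finset.sum_range_succ]
        rw [Cc_eq_zero (k+1) (k+1) (by omega)]
        simp
      rw [ha, hbb]
      ring
    -- analytic step
    have hrec : ((k:ℝ)+2) * (1 - b^2) * J (k+3)
        = (2*(k:ℝ)+3) * J (k+2) - ((k:ℝ)+1) * J (k+1) := by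
      have h := recurrence hb hb0 (k+1)
      push_cast at h
      have e1 : k+1+2 = k+3 := by omega
      have e2 : k+1+1 = k+2 := by omega
      rw [e1, e2] at h
      linarith [h]
    have hne : ((k:ℝ)+2) * (1 - b^2) ≠ 0 :=
      mul_ne_zero (by positivity) (ne_of_gt (one_sub_sq_pos hb))
    apply mul_left_cancel₀ hne
    rw [hrec, ih1, ih2, ← hr2]
    have e2 : r ^ (2*(k+1)+1) = r ^ (2*k+1) * r ^ 2 := by ring
    have e3 : r ^ (2*(k+2)+1) = r ^ (2*k+1) * r ^ 2 * r ^ 2 := by ring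
    rw [e2, e3]
    have hRne : r ^ (2*k+1) ≠ 0 := pow_ne_zero _ hr.ne'
    have hfin : ((k:ℝ)+2) * r^2 * (1 / (r ^ (2*k+1) * r^2 * r^2) * S3)
        = 1 / (r ^ (2*k+1) * r^2) * (((k:ℝ)+2) * S3) := by
      field_simp
    rw [hfin, H]
    field_simp

theorem stmt_4 (α : ℝ) (hα : α ≠ 0) (m : ℕ) (hm : 1 ≤ m) :
    ∃ C : ℕ → ℝ, C 0 ≠ 0 ∧
      ∀ h : ℝ, 0 < h → h < 1 / α ^ 2 →
        ∫ t in (0 : ℝ)..(2 * π), 1 / (1 - α * (Real.sqrt h * Real.sin t)) ^ m =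
          (1 / Real.sqrt (1 - α ^ 2 * h) ^ (2 * m - 1)) *
            ∑ j ∈ Finset.range ((m - 1) / 2 + 1),
              C j * Real.sqrt (1 - α ^ 2 * h) ^ (2 * j) := by
  refine ⟨Cc m, ne_of_gt (Cc_pos m hm), ?_⟩
  obtain ⟨n, rfl⟩ : ∃ n, m = n + 1 := ⟨m - 1, by omega⟩
  intro h h0 h1
  simp only [← mul_assoc]
  set b := α * Real.sqrt h with hbdef
  have hsq : Real.sqrt h ^ 2 = h := Real.sq_sqrt h0.le
  have hb2 : b ^ 2 = α ^ 2 * h := by rw [hbdef, mul_pow, hsq]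
  have hα2 : 0 < α ^ 2 := by positivity
  have hb2lt : b ^ 2 < 1 := by
    rw [hb2]
    have := (lt_div_iff₀ hα2).1 h1
    nlinarith
  have hb : |b| < 1 := by nlinarith [abs_nonneg b, sq_abs b]
  have hb0 : b ≠ 0 := mul_ne_zero hα (Real.sqrt_ne_zero'.2 h0)
  have key := mainlem hb hb0 n
  rw [show α ^ 2 * h = b ^ 2 from hb2.symm]
  rw [key]
  rw [show 2 * (n + 1) - 1 = 2 * n + 1 by omega]
  congr 1
  rw [show n + 1 - 1 = n by omega]
  refine (Finset.sum_subset (Finset.range_subset_range.2 (by omega)) ?_).symm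
  intro j hj hj2
  rw [Cc_eq_zero (n+1) j ?_, zero_mul]
  simp only [Finset.mem_range] at hj hj2
  omega
end

section
/- Any zero h ∈ (0, H₀) of the function Φ(h) = (1-α₁²h)^{-(2m₁-1)/2} P(h) + (1-α₂²h)^{-(2m₂-1)/2} Q(h) + R(h), where P, Q, R are real polynomials, is a root of a nonzero real polynomial of degree at most 2·deg P + 2·deg Q + 2(m₁+m₂) + 2·deg R + 3, provided Φ is not identically zero. -/
open Polynomial Set

noncomputable def stepP (p : Polynomial ℝ) (c e : ℝ) : Polynomial ℝ :=
  derivative p * (1 - C c * X) - C (e * c) * p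

noncomputable def stepV (p : Polynomial ℝ) (c₁ c₂ x y : ℝ) : Polynomial ℝ :=
  derivative p * ((1 - C c₁ * X) * (1 - C c₂ * X))
    - C (x * c₁) * p * (1 - C c₂ * X) - C (y * c₂) * p * (1 - C c₁ * X)

lemma natDegree_one_sub_C_mul_X (c : ℝ) : (1 - C c * X : Polynomial ℝ).natDegree ≤ 1 := by
  refine le_trans (natDegree_sub_le _ _) ?_
  simp only [natDegree_one, max_le_iff]
  exact ⟨Nat.zero_le _, le_trans (natDegree_C_mul_le _ _) natDegree_X_le⟩

lemma natDegree_stepP_le (p : Polynomial ℝ) (c e : ℝ) :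
    (stepP p c e).natDegree ≤ p.natDegree := by
  unfold stepP
  refine le_trans (natDegree_sub_le _ _) (max_le ?_ (natDegree_C_mul_le _ _))
  rcases Nat.eq_zero_or_pos p.natDegree with h0 | h1
  · rw [eq_C_of_natDegree_eq_zero h0]
    simp
  · refine le_trans natDegree_mul_le ?_
    have := natDegree_derivative_le p
    have := natDegree_one_sub_C_mul_X c
    omega

lemma natDegree_stepV_le (p : Polynomial ℝ) (c₁ c₂ x y : ℝ) :
    (stepV p c₁ c₂ x y).natDegree ≤ p.natDegree + 1 := by
  unfold stepV
  refine le_trans (natDegree_sub_le _ _) (max_le (le_trans (natDegree_sub_le _ _)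
    (max_le ?_ ?_)) ?_)
  · rcases Nat.eq_zero_or_pos p.natDegree with h0 | h1
    · rw [eq_C_of_natDegree_eq_zero h0]; simp
    · refine le_trans natDegree_mul_le ?_
      have := natDegree_derivative_le p
      have h2 : ((1 - C c₁ * X) * (1 - C c₂ * X) : Polynomial ℝ).natDegree ≤ 2 := by
        refine le_trans natDegree_mul_le ?_
        have := natDegree_one_sub_C_mul_X c₁
        have := natDegree_one_sub_C_mul_X c₂
        omega
      omega
  · refine le_trans natDegree_mul_le ?_
    have := natDegree_C_mul_le (x * c₁) p
    have := natDegree_one_sub_C_mul_X c₂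
    omega
  · refine le_trans natDegree_mul_le ?_
    have := natDegree_C_mul_le (y * c₂) p
    have := natDegree_one_sub_C_mul_X c₁
    omega

lemma hasDerivAt_one_sub (c : ℝ) (h : ℝ) : HasDerivAt (fun t : ℝ => 1 - c * t) (-c) h := by
  simpa using ((hasDerivAt_id h).const_mul c).const_sub 1

lemma hasDerivAt_rpow_one_sub (c e : ℝ) {h : ℝ} (hp : (0:ℝ) < 1 - c * h) :
    HasDerivAt (fun t : ℝ => (1 - c * t) ^ e) (e * (1 - c * h) ^ (e - 1) * (-c)) h := by
  have := (Real.hasDerivAt_rpow_const (x := 1 - c * h) (p := e)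
    (Or.inl hp.ne')).comp h (hasDerivAt_one_sub c h)
  simpa [Function.comp_def] using this

lemma hasDerivAt_poly_rpow (p : Polynomial ℝ) (c e : ℝ) {h : ℝ} (hp : (0:ℝ) < 1 - c * h) :
    HasDerivAt (fun t => p.eval t * (1 - c * t) ^ e)
      ((stepP p c e).eval h * (1 - c * h) ^ (e - 1)) h := by
  have hm := (p.hasDerivAt h).mul (hasDerivAt_rpow_one_sub c e hp)
  refine hm.congr_deriv ?_
  have key : (1 - c * h) ^ e = (1 - c * h) ^ (e - 1) * (1 - c * h) := by
    rw [← Real.rpow_add_one hp.ne']; ring_nf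
  simp only [stepP, eval_sub, eval_mul, eval_one, eval_C, eval_X, key]
  ring

lemma hasDerivAt_poly_rpow2 (p : Polynomial ℝ) (c₁ c₂ x y : ℝ) {h : ℝ}
    (h1 : (0:ℝ) < 1 - c₁ * h) (h2 : (0:ℝ) < 1 - c₂ * h) :
    HasDerivAt (fun t => p.eval t * ((1 - c₁ * t) ^ x * (1 - c₂ * t) ^ y))
      ((stepV p c₁ c₂ x y).eval h * ((1 - c₁ * h) ^ (x - 1) * (1 - c₂ * h) ^ (y - 1))) h := by
  have hw := (hasDerivAt_rpow_one_sub c₁ x h1).mul (hasDerivAt_rpow_one_sub c₂ y h2)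
  have hm := (p.hasDerivAt h).mul hw
  refine hm.congr_deriv ?_
  have key1 : (1 - c₁ * h) ^ x = (1 - c₁ * h) ^ (x - 1) * (1 - c₁ * h) := by
    rw [← Real.rpow_add_one h1.ne']; ring_nf
  have key2 : (1 - c₂ * h) ^ y = (1 - c₂ * h) ^ (y - 1) * (1 - c₂ * h) := by
    rw [← Real.rpow_add_one h2.ne']; ring_nf
  simp only [stepV, eval_sub, eval_mul, eval_one, eval_C, eval_X, key1, key2, Pi.mul_apply]
  ring


lemma rolle_card {l r : ℝ} {f g : ℝ → ℝ}
    (hd : ∀ x ∈ Ioo l r, HasDerivAt f (g x) x)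
    {T : Set ℝ} (hT : ∀ x ∈ Ioo l r, g x = 0 → x ∈ T) (hTf : T.Finite) :
    {x | x ∈ Ioo l r ∧ f x = 0}.Finite ∧
      {x | x ∈ Ioo l r ∧ f x = 0}.ncard ≤ T.ncard + 1 := by
  set Z := {x | x ∈ Ioo l r ∧ f x = 0} with hZdef
  have key : ∀ F : Finset ℝ, ↑F ⊆ Z → F.card ≤ T.ncard + 1 := by
    intro F hF
    by_contra hcon
    push_neg at hcon
    set σ : Fin F.card ↪o ℝ := F.orderEmbOfFin rfl with hσ
    have hmem : ∀ i : Fin F.card, σ i ∈ Z := fun i => hF (F.orderEmbOfFin_mem rfl i)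
    have hch : ∀ i : ℕ, ∀ hi : i + 1 < F.card,
        ∃ ct, ct ∈ T ∧ σ ⟨i, by omega⟩ < ct ∧ ct < σ ⟨i + 1, hi⟩ := by
      intro i hi
      set x₁ := σ ⟨i, by omega⟩ with hx₁
      set x₂ := σ ⟨i + 1, hi⟩ with hx₂
      have hx12 : x₁ < x₂ := by
        apply σ.strictMono
        simp [Fin.lt_def]
      have hz1 : x₁ ∈ Z := hmem _
      have hz2 : x₂ ∈ Z := hmem _
      have hsub : Icc x₁ x₂ ⊆ Ioo l r := fun t ht =>
        ⟨lt_of_lt_of_le hz1.1.1 ht.1, lt_of_le_of_lt ht.2 hz2.1.2⟩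
      have hcont : ContinuousOn f (Icc x₁ x₂) := fun t ht =>
        ((hd t (hsub ht)).continuousAt).continuousWithinAt
      have hder : ∀ t ∈ Ioo x₁ x₂, HasDerivAt f (g t) t := fun t ht =>
        hd t (hsub ⟨ht.1.le, ht.2.le⟩)
      obtain ⟨ct, hct, hct0⟩ :=
        exists_hasDerivAt_eq_zero hx12 hcont (by rw [hz1.2, hz2.2]) hder
      exact ⟨ct, hT ct (hsub ⟨hct.1.le, hct.2.le⟩) hct0, hct.1, hct.2⟩
    choose! ct hctT hct1 hct2 using hch
    have hcardT : (Finset.range (F.card - 1)).card ≤ hTf.toFinset.card := by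
      refine Finset.card_le_card_of_injOn ct ?_ ?_
      · intro i hi
        simp only [Finset.coe_range, Set.mem_Iio, Finset.mem_coe, Finset.mem_range] at hi
        simp only [Finset.mem_coe, Set.Finite.mem_toFinset, Set.Finite.coe_toFinset]
        exact hctT i (by omega)
      · intro i hi j hj hij
        simp only [Finset.coe_range, Set.mem_Iio] at hi hj
        by_contra hne
        rcases Nat.lt_or_ge i j with hlt | hge
        · have h1 : ct i < σ ⟨i + 1, by omega⟩ := hct2 i (by omega)
          have h2 : σ ⟨j, by omega⟩ < ct j := hct1 j (by omega)
          have h3 : σ (⟨i + 1, by omega⟩ : Fin F.card) ≤ σ ⟨j, by omega⟩ := by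
            apply σ.monotone
            simp [Fin.le_def]
            omega
          have : ct i < ct j := lt_of_lt_of_le h1 (le_trans h3 h2.le)
          exact absurd hij (ne_of_lt this)
        · have hlt : j < i := by omega
          have h1 : ct j < σ ⟨j + 1, by omega⟩ := hct2 j (by omega)
          have h2 : σ ⟨i, by omega⟩ < ct i := hct1 i (by omega)
          have h3 : σ (⟨j + 1, by omega⟩ : Fin F.card) ≤ σ ⟨i, by omega⟩ := by
            apply σ.monotone
            simp [Fin.le_def]
            omega
          have : ct j < ct i := lt_of_lt_of_le h1 (le_trans h3 h2.le)
          exact absurd hij (ne_of_gt this)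
    rw [Finset.card_range, ← Set.ncard_eq_toFinset_card T hTf] at hcardT
    omega
  have hfin : Z.Finite := by
    by_contra hinf
    have hinf' : Z.Infinite := hinf
    obtain ⟨t, htZ, htfin, htcard⟩ := hinf'.exists_subset_ncard_eq (T.ncard + 2)
    have := key htfin.toFinset (by rwa [Set.Finite.coe_toFinset])
    rw [← Set.ncard_eq_toFinset_card t htfin] at this
    omega
  refine ⟨hfin, ?_⟩
  have := key hfin.toFinset (by simp)
  rwa [Set.ncard_eq_toFinset_card Z hfin]

lemma step_count {l r : ℝ} {f g : ℝ → ℝ} {M : ℕ}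
    (hd : ∀ x ∈ Ioo l r, HasDerivAt f (g x) x)
    (hb : ({x | x ∈ Ioo l r ∧ g x = 0}.Finite ∧
        {x | x ∈ Ioo l r ∧ g x = 0}.ncard ≤ M) ∨ ∀ x ∈ Ioo l r, g x = 0) :
    ({x | x ∈ Ioo l r ∧ f x = 0}.Finite ∧
        {x | x ∈ Ioo l r ∧ f x = 0}.ncard ≤ M + 1) ∨ ∀ x ∈ Ioo l r, f x = 0 := by
  rcases hb with ⟨hfin, hcard⟩ | hzero
  · left
    obtain ⟨h1, h2⟩ := rolle_card hd (T := {x | x ∈ Ioo l r ∧ g x = 0})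
      (fun x hx hgx => ⟨hx, hgx⟩) hfin
    exact ⟨h1, h2.trans (by omega)⟩
  · have hconst : ∀ x ∈ Ioo l r, ∀ y ∈ Ioo l r, x ≤ y → f y = f x := by
      intro x hx y hy hxy
      have hsub : Icc x y ⊆ Ioo l r := fun t ht =>
        ⟨lt_of_lt_of_le hx.1 ht.1, lt_of_le_of_lt ht.2 hy.2⟩
      have := constant_of_has_deriv_right_zero (f := f) (a := x) (b := y)
        (fun t ht => ((hd t (hsub ht)).continuousAt).continuousWithinAt)
        (fun t ht => by
          have h0 : g t = 0 := hzero t (hsub ⟨ht.1, ht.2.le⟩)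
          have h1 := hd t (hsub ⟨ht.1, ht.2.le⟩)
          rw [h0] at h1
          exact h1.hasDerivWithinAt)
      exact this y ⟨hxy, le_rfl⟩
    by_cases hex : ∃ x ∈ Ioo l r, f x ≠ 0
    · left
      obtain ⟨x₀, hx₀, hfx₀⟩ := hex
      have hempty : {x | x ∈ Ioo l r ∧ f x = 0} = ∅ := by
        ext t
        simp only [Set.mem_setOf_eq, Set.mem_empty_iff_false, iff_false, not_and]
        intro ht hft
        rcases le_total t x₀ with hle | hle
        · exact hfx₀ ((hconst t ht x₀ hx₀ hle).trans hft)
        · exact hfx₀ ((hconst x₀ hx₀ t ht hle).symm.trans hft)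
      rw [hempty]
      simp
    · right
      push_neg at hex
      exact hex

lemma chain_count {l r : ℝ} : ∀ (n : ℕ) (F : ℕ → ℝ → ℝ) (N : ℕ),
    (∀ j, j < n → ∀ x ∈ Ioo l r, HasDerivAt (F j) (F (j + 1) x) x) →
    (({x | x ∈ Ioo l r ∧ F n x = 0}.Finite ∧
        {x | x ∈ Ioo l r ∧ F n x = 0}.ncard ≤ N) ∨ ∀ x ∈ Ioo l r, F n x = 0) →
    (({x | x ∈ Ioo l r ∧ F 0 x = 0}.Finite ∧
        {x | x ∈ Ioo l r ∧ F 0 x = 0}.ncard ≤ N + n) ∨ ∀ x ∈ Ioo l r, F 0 x = 0) := by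
  intro n
  induction n with
  | zero => intro F N _ hb; simpa using hb
  | succ n ih =>
    intro F N hder hb
    have hstep := step_count (hd := hder n (by omega)) (hb := hb)
    have := ih F (N + 1) (fun j hj => hder j (by omega)) hstep
    rcases this with ⟨h1, h2⟩ | h
    · exact Or.inl ⟨h1, h2.trans (by omega)⟩
    · exact Or.inr h

noncomputable def chain1 (c e0 : ℝ) (p : Polynomial ℝ) : ℕ → Polynomial ℝ
  | 0 => p
  | j + 1 => stepP (chain1 c e0 p j) c (e0 - (j : ℝ))

noncomputable def chain2 (c₁ c₂ x0 y0 : ℝ) (p : Polynomial ℝ) : ℕ → Polynomial ℝ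
  | 0 => p
  | j + 1 => stepV (chain2 c₁ c₂ x0 y0 p j) c₁ c₂ (x0 - (j : ℝ)) (y0 - (j : ℝ))

noncomputable def Ffun (c σ : ℝ) (p : Polynomial ℝ) (j : ℕ) : ℝ → ℝ :=
  fun t => (chain1 c (-σ) p j).eval t * (1 - c * t) ^ (-σ - (j : ℝ))

noncomputable def Gfun (c₁ c₂ x0 y0 : ℝ) (p : Polynomial ℝ) (j : ℕ) : ℝ → ℝ :=
  fun t => (chain2 c₁ c₂ x0 y0 p j).eval t *
    ((1 - c₁ * t) ^ (x0 - (j : ℝ)) * (1 - c₂ * t) ^ (y0 - (j : ℝ)))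



lemma chain1_natDegree_le (c e0 : ℝ) (p : Polynomial ℝ) (j : ℕ) :
    (chain1 c e0 p j).natDegree ≤ p.natDegree := by
  induction j with
  | zero => exact le_rfl
  | succ j ih => exact le_trans (natDegree_stepP_le _ _ _) ih

lemma chain2_natDegree_le (c₁ c₂ x0 y0 : ℝ) (p : Polynomial ℝ) (j : ℕ) :
    (chain2 c₁ c₂ x0 y0 p j).natDegree ≤ p.natDegree + j := by
  induction j with
  | zero => exact le_rfl
  | succ j ih =>
    refine le_trans (natDegree_stepV_le _ _ _ _ _) ?_
    omega

lemma hasDerivAt_Ffun (c σ : ℝ) (p : Polynomial ℝ) (j : ℕ) {x : ℝ} (hx : (0:ℝ) < 1 - c * x) :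
    HasDerivAt (Ffun c σ p j) (Ffun c σ p (j + 1) x) x := by
  have h1 := hasDerivAt_poly_rpow (chain1 c (-σ) p j) c (-σ - (j : ℝ)) hx
  have e1 : -σ - ((j + 1 : ℕ) : ℝ) = (-σ - (j : ℝ)) - 1 := by push_cast; ring
  have hch : chain1 c (-σ) p (j + 1) = stepP (chain1 c (-σ) p j) c (-σ - (j : ℝ)) := rfl
  unfold Ffun
  rw [hch, e1]
  exact h1

lemma hasDerivAt_Gfun (c₁ c₂ x0 y0 : ℝ) (p : Polynomial ℝ) (j : ℕ) {x : ℝ}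
    (h1 : (0:ℝ) < 1 - c₁ * x) (h2 : (0:ℝ) < 1 - c₂ * x) :
    HasDerivAt (Gfun c₁ c₂ x0 y0 p j) (Gfun c₁ c₂ x0 y0 p (j + 1) x) x := by
  have h := hasDerivAt_poly_rpow2 (chain2 c₁ c₂ x0 y0 p j) c₁ c₂ (x0 - (j : ℝ)) (y0 - (j : ℝ)) h1 h2
  have e1 : x0 - ((j + 1 : ℕ) : ℝ) = (x0 - (j : ℝ)) - 1 := by push_cast; ring
  have e2 : y0 - ((j + 1 : ℕ) : ℝ) = (y0 - (j : ℝ)) - 1 := by push_cast; ring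
  have hch : chain2 c₁ c₂ x0 y0 p (j + 1)
      = stepV (chain2 c₁ c₂ x0 y0 p j) c₁ c₂ (x0 - (j : ℝ)) (y0 - (j : ℝ)) := rfl
  unfold Gfun
  rw [hch, e1, e2]
  exact h

lemma div_sqrt_pow_eq (a pv : ℝ) (ha : (0:ℝ) < a) (n : ℕ) :
    pv / Real.sqrt a ^ n = pv * a ^ (-((n : ℝ) / 2)) := by
  have h1 : Real.sqrt a ^ n = a ^ ((n : ℝ) / 2) := by
    rw [Real.sqrt_eq_rpow, ← Real.rpow_natCast (a ^ (1 / (2:ℝ))) n, ← Real.rpow_mul ha.le]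
    ring_nf
  rw [h1, Real.rpow_neg ha.le, div_eq_mul_inv]

theorem stmt_9 (α₁ α₂ : ℝ) (hα₁ : α₁ ≠ 0) (hα₂ : α₂ ≠ 0) (hne : α₁ ≠ α₂)
    (m₁ m₂ : ℕ) (hm₁ : 1 ≤ m₁) (hm₂ : 1 ≤ m₂)
    (P Q R : Polynomial ℝ) (Φ : ℝ → ℝ)
    (hΦ : ∀ h ∈ Set.Ioo (0 : ℝ) (min (1 / α₁ ^ 2) (1 / α₂ ^ 2)),
      Φ h = P.eval h / Real.sqrt (1 - α₁ ^ 2 * h) ^ (2 * m₁ - 1)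
          + Q.eval h / Real.sqrt (1 - α₂ ^ 2 * h) ^ (2 * m₂ - 1) + R.eval h)
    (hne0 : ∃ h ∈ Set.Ioo (0 : ℝ) (min (1 / α₁ ^ 2) (1 / α₂ ^ 2)), Φ h ≠ 0) :
    ∃ S : Polynomial ℝ, S ≠ 0 ∧
      S.natDegree ≤ 2 * P.natDegree + 2 * Q.natDegree + 2 * (m₁ + m₂) + 2 * R.natDegree + 3 ∧
      ∀ h ∈ Set.Ioo (0 : ℝ) (min (1 / α₁ ^ 2) (1 / α₂ ^ 2)), Φ h = 0 → S.eval h = 0 := by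
  classical
  set c₁ := α₁ ^ 2 with hc₁def
  set c₂ := α₂ ^ 2 with hc₂def
  have hc₁ : 0 < c₁ := by positivity
  have hc₂ : 0 < c₂ := by positivity
  set rr : ℝ := min (1 / c₁) (1 / c₂) with hrr
  have hA : ∀ h ∈ Ioo (0:ℝ) rr, (0:ℝ) < 1 - c₁ * h := by
    intro h hh
    have h1 : h < 1 / c₁ := lt_of_lt_of_le hh.2 (min_le_left _ _)
    rw [lt_div_iff₀ hc₁] at h1
    nlinarith
  have hB : ∀ h ∈ Ioo (0:ℝ) rr, (0:ℝ) < 1 - c₂ * h := by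
    intro h hh
    have h1 : h < 1 / c₂ := lt_of_lt_of_le hh.2 (min_le_right _ _)
    rw [lt_div_iff₀ hc₂] at h1
    nlinarith
  set σ₁ : ℝ := ((2 * m₁ - 1 : ℕ) : ℝ) / 2 with hσ₁
  set σ₂ : ℝ := ((2 * m₂ - 1 : ℕ) : ℝ) / 2 with hσ₂
  set k₁ : ℕ := R.natDegree + 1 with hk₁
  set U0 : Polynomial ℝ := chain1 c₁ (-σ₁) P k₁ with hU0
  set V0 : Polynomial ℝ := chain1 c₂ (-σ₂) Q k₁ with hV0
  set k₂ : ℕ := U0.natDegree + 1 with hk₂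
  set x0 : ℝ := σ₁ + (k₁ : ℝ) with hx0
  set y0 : ℝ := -σ₂ - (k₁ : ℝ) with hy0
  set F1 : ℕ → ℝ → ℝ := fun j t =>
    Ffun c₁ σ₁ P j t + Ffun c₂ σ₂ Q j t + (derivative^[j] R).eval t with hF1
  set F2 : ℕ → ℝ → ℝ := fun j t =>
    (derivative^[j] U0).eval t + Gfun c₁ c₂ x0 y0 V0 j t with hF2
  -- derivatives
  have hder1 : ∀ j, ∀ x ∈ Ioo (0:ℝ) rr, HasDerivAt (F1 j) (F1 (j + 1) x) x := by
    intro j x hx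
    have h1 := hasDerivAt_Ffun c₁ σ₁ P j (hA x hx)
    have h2 := hasDerivAt_Ffun c₂ σ₂ Q j (hB x hx)
    have h3 := (derivative^[j] R).hasDerivAt x
    have hsum := (h1.add h2).add h3
    have hfn : F1 j = fun t => Ffun c₁ σ₁ P j t + Ffun c₂ σ₂ Q j t
        + (derivative^[j] R).eval t := rfl
    rw [hfn]
    refine hsum.congr_deriv ?_
    simp only [hF1, Function.iterate_succ_apply']
  have hder2 : ∀ j, ∀ x ∈ Ioo (0:ℝ) rr, HasDerivAt (F2 j) (F2 (j + 1) x) x := by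
    intro j x hx
    have h1 := (derivative^[j] U0).hasDerivAt x
    have h2 := hasDerivAt_Gfun c₁ c₂ x0 y0 V0 j (hA x hx) (hB x hx)
    have hsum := h1.add h2
    have hfn : F2 j = fun t => (derivative^[j] U0).eval t + Gfun c₁ c₂ x0 y0 V0 j t := rfl
    rw [hfn]
    refine hsum.congr_deriv ?_
    simp only [hF2, Function.iterate_succ_apply']
  -- base case for phase 2
  have hUk : derivative^[k₂] U0 = 0 := iterate_derivative_eq_zero (by omega)
  have base2 : ({x | x ∈ Ioo (0:ℝ) rr ∧ F2 k₂ x = 0}.Finite ∧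
      {x | x ∈ Ioo (0:ℝ) rr ∧ F2 k₂ x = 0}.ncard ≤ Q.natDegree + k₂) ∨
      ∀ x ∈ Ioo (0:ℝ) rr, F2 k₂ x = 0 := by
    by_cases hVk : chain2 c₁ c₂ x0 y0 V0 k₂ = 0
    · right
      intro x hx
      simp only [hF2, hUk, eval_zero, Gfun, hVk, zero_mul, add_zero, zero_add]
    · left
      have hsub : {x | x ∈ Ioo (0:ℝ) rr ∧ F2 k₂ x = 0}
          ⊆ {x | IsRoot (chain2 c₁ c₂ x0 y0 V0 k₂) x} := by
        intro x ⟨hx, hfx⟩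
        simp only [hF2, hUk, eval_zero, Gfun, zero_add] at hfx
        have hw : (0:ℝ) < (1 - c₁ * x) ^ (x0 - (k₂ : ℝ)) * (1 - c₂ * x) ^ (y0 - (k₂ : ℝ)) :=
          mul_pos (Real.rpow_pos_of_pos (hA x hx) _) (Real.rpow_pos_of_pos (hB x hx) _)
        rcases mul_eq_zero.mp hfx with h | h
        · exact h
        · exact absurd h hw.ne'
      have hroots : {x | IsRoot (chain2 c₁ c₂ x0 y0 V0 k₂) x}.Finite :=
        Polynomial.finite_setOf_isRoot hVk
      refine ⟨hroots.subset hsub, ?_⟩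
      have h1 : {x | IsRoot (chain2 c₁ c₂ x0 y0 V0 k₂) x}.ncard
          ≤ (chain2 c₁ c₂ x0 y0 V0 k₂).natDegree := by
        have heq : {x | IsRoot (chain2 c₁ c₂ x0 y0 V0 k₂) x}
            = ↑(chain2 c₁ c₂ x0 y0 V0 k₂).roots.toFinset := by
          ext t
          simp [Multiset.mem_toFinset, mem_roots', hVk]
        rw [heq, Set.ncard_coe_finset]
        exact le_trans (Multiset.toFinset_card_le _) (card_roots' _)
      have h2 : (chain2 c₁ c₂ x0 y0 V0 k₂).natDegree ≤ V0.natDegree + k₂ :=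
        chain2_natDegree_le _ _ _ _ _ _
      have h3 : V0.natDegree ≤ Q.natDegree := chain1_natDegree_le _ _ _ _
      have h4 := Set.ncard_le_ncard hsub hroots
      omega
  have res2 := chain_count k₂ F2 (Q.natDegree + k₂) (fun j _ => hder2 j) base2
  -- transfer from F2 0 to F1 k₁
  have hRk : derivative^[k₁] R = 0 := iterate_derivative_eq_zero (by omega)
  have htrans : ∀ x ∈ Ioo (0:ℝ) rr, F2 0 x = (1 - c₁ * x) ^ x0 * F1 k₁ x := by
    intro x hx
    have ha := hA x hx
    have e1 : (1 - c₁ * x) ^ x0 * (1 - c₁ * x) ^ (-σ₁ - (k₁ : ℝ)) = 1 := by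
      rw [← Real.rpow_add ha]
      have : x0 + (-σ₁ - (k₁ : ℝ)) = 0 := by rw [hx0]; ring
      rw [this, Real.rpow_zero]
    simp only [hF2, hF1, Function.iterate_zero_apply, Gfun, Ffun, hRk, eval_zero,
      Nat.cast_zero, sub_zero, add_zero]
    have hch20 : chain2 c₁ c₂ x0 y0 V0 0 = V0 := rfl
    rw [hch20]
    have hy0' : y0 = -σ₂ - (k₁ : ℝ) := rfl
    rw [mul_add, ← hU0, ← hV0, ← hy0']
    rw [show (1 - c₁ * x) ^ x0 * (eval x U0 * (1 - c₁ * x) ^ (-σ₁ - (k₁ : ℝ)))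
        = eval x U0 from by rw [mul_comm (eval x U0) _, ← mul_assoc, e1, one_mul]]
    ring
  have base1 : ({x | x ∈ Ioo (0:ℝ) rr ∧ F1 k₁ x = 0}.Finite ∧
      {x | x ∈ Ioo (0:ℝ) rr ∧ F1 k₁ x = 0}.ncard ≤ Q.natDegree + k₂ + k₂) ∨
      ∀ x ∈ Ioo (0:ℝ) rr, F1 k₁ x = 0 := by
    have hzeq : {x | x ∈ Ioo (0:ℝ) rr ∧ F1 k₁ x = 0}
        = {x | x ∈ Ioo (0:ℝ) rr ∧ F2 0 x = 0} := by
      ext x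
      simp only [Set.mem_setOf_eq, and_congr_right_iff]
      intro hx
      rw [htrans x hx]
      constructor
      · intro h; rw [h, mul_zero]
      · intro h
        rcases mul_eq_zero.mp h with h' | h'
        · exact absurd h' (Real.rpow_pos_of_pos (hA x hx) _).ne'
        · exact h'
    rcases res2 with ⟨hf, hc⟩ | hz
    · left
      rw [hzeq]
      exact ⟨hf, hc⟩
    · right
      intro x hx
      have := hz x hx
      rw [htrans x hx] at this
      rcases mul_eq_zero.mp this with h' | h'
      · exact absurd h' (Real.rpow_pos_of_pos (hA x hx) _).ne'
      · exact h'
  have res1 := chain_count k₁ F1 (Q.natDegree + k₂ + k₂) (fun j _ => hder1 j) base1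
  -- Φ agrees with F1 0 on the interval
  have hPhiF : ∀ x ∈ Ioo (0:ℝ) rr, Φ x = F1 0 x := by
    intro x hx
    rw [hΦ x hx]
    have ha := hA x hx
    have hb := hB x hx
    have hch10P : chain1 c₁ (-σ₁) P 0 = P := rfl
    have hch10Q : chain1 c₂ (-σ₂) Q 0 = Q := rfl
    simp only [hF1, Ffun, Function.iterate_zero_apply, hch10P, hch10Q, Nat.cast_zero, sub_zero]
    rw [div_sqrt_pow_eq _ _ ha, div_sqrt_pow_eq _ _ hb]
  rcases res1 with ⟨hfinZ, hcardZ⟩ | hzero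
  · -- main case : finitely many zeros
    have hZΦ : {x | x ∈ Ioo (0:ℝ) rr ∧ Φ x = 0} = {x | x ∈ Ioo (0:ℝ) rr ∧ F1 0 x = 0} := by
      ext x
      simp only [Set.mem_setOf_eq, and_congr_right_iff]
      intro hx
      rw [hPhiF x hx]
    rw [← hZΦ] at hfinZ hcardZ
    refine ⟨∏ z ∈ hfinZ.toFinset, (X - Polynomial.C z), ?_, ?_, ?_⟩
    · exact (monic_prod_of_monic _ _ (fun z _ => monic_X_sub_C z)).ne_zero
    · rw [Polynomial.natDegree_prod _ _ (fun z _ => X_sub_C_ne_zero z)]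
      simp only [natDegree_X_sub_C, Finset.sum_const, smul_eq_mul, mul_one]
      rw [← Set.ncard_eq_toFinset_card _ hfinZ]
      have hU0le : U0.natDegree ≤ P.natDegree := chain1_natDegree_le _ _ _ _
      omega
    · intro h hh hΦh
      rw [Polynomial.eval_prod]
      refine Finset.prod_eq_zero (i := h) ?_ ?_
      · rw [Set.Finite.mem_toFinset]
        exact ⟨hh, hΦh⟩
      · simp
  · -- Φ vanishes identically : contradiction
    exfalso
    obtain ⟨h₀, hh₀, hΦ0⟩ := hne0
    exact hΦ0 ((hPhiF h₀ hh₀).trans (hzero h₀ hh₀))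
end

section
/- Let α₁ ≠ α₂ be nonzero reals and s, m₁, m₂ positive integers. Suppose F : (0, H₀) → ℝ has the form F(h) = r₁^{-(2m₁-1)} P(h) + r₂^{-(2m₂-1)} Q(h) + R(h), with r_i = √(1-α_i²h), H₀ = min(1/α₁², 1/α₂²), P of degree ≤ m₁−1+s, Q of degree ≤ m₂−1+s, R of degree ≤ ⌊(2s+1−m₁−m₂)/2⌋, and F not identically zero. Then F has at most 4s + 4(m₁+m₂) − 6 zeros in (0, H₀), counted without multiplicity. -/
open Polynomial

lemma aux_parity (c : ℝ) (hc : c ≠ 0) (Z B : ℝ[X])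
    (h : Z ^ 2 * (C (-c) * X + C 1) = B ^ 2) :
    Z = 0 ∧ B = 0 := by
  have hc' : (-c) ≠ 0 := neg_ne_zero.mpr hc
  have hu : (C (-c) * X + C 1 : ℝ[X]).natDegree = 1 := natDegree_linear hc'
  have hu0 : (C (-c) * X + C 1 : ℝ[X]) ≠ 0 := fun h0 => by
    rw [h0, natDegree_zero] at hu; omega
  by_cases hZ : Z = 0
  · subst hZ
    rw [zero_pow (by norm_num), zero_mul] at h
    refine ⟨rfl, pow_eq_zero_iff (n := 2) (by norm_num) |>.mp h.symm⟩
  · have hB : B ≠ 0 := by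
      rintro rfl
      rw [zero_pow (by norm_num)] at h
      exact hZ (pow_eq_zero_iff (n := 2) (by norm_num) |>.mp
        ((mul_eq_zero.mp h).resolve_right hu0))
    exfalso
    have hd := congrArg natDegree h
    rw [natDegree_mul (pow_ne_zero _ hZ) hu0, natDegree_pow, natDegree_pow, hu] at hd
    omega

lemma aux_parity2 (t : ℝ) (W Y u c : ℝ[X]) (hu : u.eval t ≠ 0) (hc : c.eval t ≠ 0)
    (h : W * W = Y * Y * (c * ((X - C t) * u))) : Y = 0 := by
  by_contra hY
  have hc0 : c ≠ 0 := fun h' => hc (by simp [h'])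
  have hu0 : u ≠ 0 := fun h' => hu (by simp [h'])
  have hX : (X - C t : ℝ[X]) ≠ 0 := X_sub_C_ne_zero t
  have hR : Y * Y * (c * ((X - C t) * u)) ≠ 0 :=
    mul_ne_zero (mul_ne_zero hY hY) (mul_ne_zero hc0 (mul_ne_zero hX hu0))
  have hW : W ≠ 0 := by
    rintro rfl; rw [zero_mul] at h; exact hR h.symm
  have e1 : rootMultiplicity t (W * W) = rootMultiplicity t W + rootMultiplicity t W :=
    rootMultiplicity_mul (mul_ne_zero hW hW)
  have e2 : rootMultiplicity t (Y * Y * (c * ((X - C t) * u)))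
      = (rootMultiplicity t Y + rootMultiplicity t Y) + (0 + (1 + 0)) := by
    rw [rootMultiplicity_mul hR, rootMultiplicity_mul (mul_ne_zero hY hY),
      rootMultiplicity_mul (mul_ne_zero hc0 (mul_ne_zero hX hu0)),
      rootMultiplicity_mul (mul_ne_zero hX hu0),
      rootMultiplicity_X_sub_C_self, rootMultiplicity_eq_zero hc,
      rootMultiplicity_eq_zero hu]
  rw [h, e2] at e1
  omega

set_option maxHeartbeats 3200000 in
theorem stmt_17 (α₁ α₂ : ℝ) (hα₁ : α₁ ≠ 0) (hα₂ : α₂ ≠ 0) (hne : α₁ ≠ α₂)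
    (s m₁ m₂ : ℕ) (hs : 1 ≤ s) (hm₁ : 1 ≤ m₁) (hm₂ : 1 ≤ m₂)
    (P Q R : Polynomial ℝ)
    (hP : P.natDegree ≤ m₁ - 1 + s) (hQ : Q.natDegree ≤ m₂ - 1 + s)
    (hR : R.natDegree ≤ (2 * s + 1 - m₁ - m₂) / 2)
    (F : ℝ → ℝ)
    (hF : ∀ h ∈ Set.Ioo (0 : ℝ) (min (1 / α₁ ^ 2) (1 / α₂ ^ 2)),
      F h = P.eval h / Real.sqrt (1 - α₁ ^ 2 * h) ^ (2 * m₁ - 1)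
          + Q.eval h / Real.sqrt (1 - α₂ ^ 2 * h) ^ (2 * m₂ - 1) + R.eval h)
    (hne0 : ∃ h ∈ Set.Ioo (0 : ℝ) (min (1 / α₁ ^ 2) (1 / α₂ ^ 2)), F h ≠ 0) :
    {h : ℝ | h ∈ Set.Ioo (0 : ℝ) (min (1 / α₁ ^ 2) (1 / α₂ ^ 2)) ∧ F h = 0}.Finite ∧
      {h : ℝ | h ∈ Set.Ioo (0 : ℝ) (min (1 / α₁ ^ 2) (1 / α₂ ^ 2)) ∧ F h = 0}.ncard ≤
        4 * s + 4 * (m₁ + m₂) - 6 := by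
  have ha1 : (0:ℝ) < α₁ ^ 2 := by positivity
  have ha2 : (0:ℝ) < α₂ ^ 2 := by positivity
  set T := min (1 / α₁ ^ 2) (1 / α₂ ^ 2) with hTdef
  -- positivity of 1 - αᵢ² h on the interval
  have hv : ∀ h ∈ Set.Ioo (0:ℝ) T, 0 < 1 - α₁ ^ 2 * h ∧ 0 < 1 - α₂ ^ 2 * h := by
    rintro h ⟨h0, hlt⟩
    have h1 : h < 1 / α₁ ^ 2 := lt_of_lt_of_le hlt (min_le_left _ _)
    have h2 : h < 1 / α₂ ^ 2 := lt_of_lt_of_le hlt (min_le_right _ _)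
    have e1 : α₁ ^ 2 * (1 / α₁ ^ 2) = 1 := mul_one_div_cancel ha1.ne'
    have e2 : α₂ ^ 2 * (1 / α₂ ^ 2) = 1 := mul_one_div_cancel ha2.ne'
    constructor
    · nlinarith
    · nlinarith
  -- the polynomials
  set u₁ : ℝ[X] := C (-(α₁^2)) * X + C 1 with hu₁def
  set u₂ : ℝ[X] := C (-(α₂^2)) * X + C 1 with hu₂def
  have hu₁ev : ∀ h : ℝ, u₁.eval h = 1 - α₁ ^ 2 * h := by
    intro h; rw [hu₁def]; simp; ring
  have hu₂ev : ∀ h : ℝ, u₂.eval h = 1 - α₂ ^ 2 * h := by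
    intro h; rw [hu₂def]; simp; ring
  have hdu₁ : u₁.natDegree = 1 := natDegree_linear (neg_ne_zero.mpr ha1.ne')
  have hdu₂ : u₂.natDegree = 1 := natDegree_linear (neg_ne_zero.mpr ha2.ne')
  have hu₁0 : u₁ ≠ 0 := fun h0 => by rw [h0, natDegree_zero] at hdu₁; omega
  have hu₂0 : u₂ ≠ 0 := fun h0 => by rw [h0, natDegree_zero] at hdu₂; omega
  set A : ℝ[X] := P * u₂ ^ (m₂ - 1) with hAdef
  set B : ℝ[X] := Q * u₁ ^ (m₁ - 1) with hBdef
  set Cc : ℝ[X] := R * (u₁ ^ (m₁ - 1) * u₂ ^ (m₂ - 1)) with hCcdef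
  -- the key pointwise identity
  have key : ∀ h ∈ Set.Ioo (0:ℝ) T,
      F h * (Real.sqrt (1 - α₁ ^ 2 * h) ^ (2 * m₁ - 1) *
          Real.sqrt (1 - α₂ ^ 2 * h) ^ (2 * m₂ - 1)) =
        A.eval h * Real.sqrt (1 - α₂ ^ 2 * h) + B.eval h * Real.sqrt (1 - α₁ ^ 2 * h)
          + Cc.eval h * (Real.sqrt (1 - α₁ ^ 2 * h) * Real.sqrt (1 - α₂ ^ 2 * h)) := by
    intro h hh
    obtain ⟨hv1, hv2⟩ := hv h hh
    set x₁ := Real.sqrt (1 - α₁ ^ 2 * h) with hx₁def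
    set x₂ := Real.sqrt (1 - α₂ ^ 2 * h) with hx₂def
    have hx₁ : 0 < x₁ := Real.sqrt_pos.mpr hv1
    have hx₂ : 0 < x₂ := Real.sqrt_pos.mpr hv2
    have hx₁sq : x₁ ^ 2 = 1 - α₁ ^ 2 * h := Real.sq_sqrt hv1.le
    have hx₂sq : x₂ ^ 2 = 1 - α₂ ^ 2 * h := Real.sq_sqrt hv2.le
    have hp₁ : x₁ ^ (2 * m₁ - 1) = (x₁ ^ 2) ^ (m₁ - 1) * x₁ := by
      rw [← pow_mul, ← pow_succ]
      congr 1
      omega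
    have hp₂ : x₂ ^ (2 * m₂ - 1) = (x₂ ^ 2) ^ (m₂ - 1) * x₂ := by
      rw [← pow_mul, ← pow_succ]
      congr 1
      omega
    have eA : A.eval h = P.eval h * ((x₂ ^ 2) ^ (m₂ - 1)) := by
      rw [hAdef, eval_mul, eval_pow, hu₂ev, ← hx₂sq]
    have eB : B.eval h = Q.eval h * ((x₁ ^ 2) ^ (m₁ - 1)) := by
      rw [hBdef, eval_mul, eval_pow, hu₁ev, ← hx₁sq]
    have eC : Cc.eval h = R.eval h * ((x₁ ^ 2) ^ (m₁ - 1) * (x₂ ^ 2) ^ (m₂ - 1)) := by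
      rw [hCcdef, eval_mul, eval_mul, eval_pow, eval_pow, hu₁ev, hu₂ev, ← hx₁sq, ← hx₂sq]
    rw [hF h hh, hp₁, hp₂, eA, eB, eC]
    have hx₁0 : x₁ ≠ 0 := ne_of_gt hx₁
    have hx₂0 : x₂ ≠ 0 := ne_of_gt hx₂
    field_simp
  -- counting reduces to finding a suitable nonzero polynomial
  suffices hmain : ∃ g : ℝ[X], g ≠ 0 ∧ g.natDegree ≤ 4 * s + 4 * (m₁ + m₂) - 6 ∧
      (∀ h ∈ Set.Ioo (0:ℝ) T, F h = 0 → g.eval h = 0) by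
    obtain ⟨g, hg0, hgd, hgz⟩ := hmain
    have hsub : {h : ℝ | h ∈ Set.Ioo (0:ℝ) T ∧ F h = 0} ⊆ ↑g.roots.toFinset := by
      rintro h ⟨hmem, hzero⟩
      simp only [Finset.mem_coe, Multiset.mem_toFinset, mem_roots hg0]
      exact hgz h hmem hzero
    refine ⟨Set.Finite.subset (g.roots.toFinset.finite_toSet) hsub, ?_⟩
    calc {h : ℝ | h ∈ Set.Ioo (0:ℝ) T ∧ F h = 0}.ncard
        ≤ (↑g.roots.toFinset : Set ℝ).ncard :=
          Set.ncard_le_ncard hsub (Finset.finite_toSet _)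
      _ = g.roots.toFinset.card := Set.ncard_coe_finset _
      _ ≤ Multiset.card g.roots := Multiset.toFinset_card_le _
      _ ≤ g.natDegree := g.card_roots'
      _ ≤ 4 * s + 4 * (m₁ + m₂) - 6 := hgd
  -- degree bound helpers
  have hmd : ∀ (p q : ℝ[X]) (a b : ℕ), p.natDegree ≤ a → q.natDegree ≤ b →
      (p * q).natDegree ≤ a + b :=
    fun p q a b hp hq => natDegree_mul_le.trans (add_le_add hp hq)
  have hpd : ∀ (p : ℝ[X]) (n a : ℕ), p.natDegree ≤ a → (p ^ n).natDegree ≤ n * a :=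
    fun p n a hp => natDegree_pow_le.trans (Nat.mul_le_mul_left n hp)
  have hdA : A.natDegree ≤ (m₁ - 1 + s) + (m₂ - 1) * 1 :=
    hmd _ _ _ _ hP (hpd _ _ _ hdu₂.le)
  have hdB : B.natDegree ≤ (m₂ - 1 + s) + (m₁ - 1) * 1 :=
    hmd _ _ _ _ hQ (hpd _ _ _ hdu₁.le)
  have hdCc : Cc.natDegree ≤ (2 * s + 1 - m₁ - m₂) / 2 + ((m₁ - 1) * 1 + (m₂ - 1) * 1) :=
    hmd _ _ _ _ hR (hmd _ _ _ _ (hpd _ _ _ hdu₁.le) (hpd _ _ _ hdu₂.le))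
  have hdiv : 2 * ((2 * s + 1 - m₁ - m₂) / 2) ≤ 2 * s + 1 - m₁ - m₂ := by omega
  by_cases hdeg : α₁ ^ 2 = α₂ ^ 2
  · -- degenerate case : α₁² = α₂²
    refine ⟨(A + B) ^ 2 * u₁ - Cc ^ 2 * u₁ ^ 2, ?_, ?_, ?_⟩
    · -- nonzero
      intro hg
      have hgeq : (A + B) ^ 2 * u₁ = Cc ^ 2 * u₁ ^ 2 := by
        rwa [sub_eq_zero] at hg
      have h2 : Cc ^ 2 * u₁ = (A + B) ^ 2 :=
        mul_right_cancel₀ hu₁0 (by linear_combination - hgeq)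
      obtain ⟨hCc0, hAB0⟩ := aux_parity (α₁ ^ 2) ha1.ne' Cc (A + B)
        (by rw [← hu₁def]; linear_combination h2)
      have hR0 : R = 0 :=
        (mul_eq_zero.mp (hCcdef.symm.trans hCc0)).resolve_right
          (mul_ne_zero (pow_ne_zero _ hu₁0) (pow_ne_zero _ hu₂0))
      obtain ⟨h0, hh0, hFne⟩ := hne0
      apply hFne
      have hk := key h0 hh0
      obtain ⟨hv1, hv2⟩ := hv h0 hh0
      have hxeq : Real.sqrt (1 - α₂ ^ 2 * h0) = Real.sqrt (1 - α₁ ^ 2 * h0) := by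
        rw [hdeg]
      rw [hxeq] at hk
      set x := Real.sqrt (1 - α₁ ^ 2 * h0) with hxdef
      have hx : 0 < x := Real.sqrt_pos.mpr hv1
      have hab : A.eval h0 + B.eval h0 = 0 := by
        rw [← eval_add, hAB0, eval_zero]
      have hz : A.eval h0 * x + B.eval h0 * x + Cc.eval h0 * (x * x) = 0 := by
        rw [hCc0, eval_zero]
        nlinarith [hab]
      rw [hz] at hk
      exact (mul_eq_zero.mp hk).resolve_right
        (ne_of_gt (mul_pos (pow_pos hx _) (pow_pos hx _)))
    · -- degree bound
      refine (natDegree_sub_le _ _).trans (max_le ?_ ?_)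
      · have h1 : (A + B).natDegree ≤
            max ((m₁ - 1 + s) + (m₂ - 1) * 1) ((m₂ - 1 + s) + (m₁ - 1) * 1) :=
          (natDegree_add_le _ _).trans (max_le_max hdA hdB)
        refine (hmd _ _ (2 * _) 1 (hpd _ _ _ h1) hdu₁.le).trans ?_
        rcases max_cases ((m₁ - 1 + s) + (m₂ - 1) * 1) ((m₂ - 1 + s) + (m₁ - 1) * 1) with
          ⟨he, _⟩ | ⟨he, _⟩ <;> rw [he] <;> omega
      · refine (hmd _ _ (2 * _) (2 * 1) (hpd _ _ _ hdCc) (hpd _ _ _ hdu₁.le)).trans ?_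
        omega
    · -- zeros of F are roots
      intro h hmem hF0
      have hk := key h hmem
      obtain ⟨hv1, hv2⟩ := hv h hmem
      have hxeq : Real.sqrt (1 - α₂ ^ 2 * h) = Real.sqrt (1 - α₁ ^ 2 * h) := by
        rw [hdeg]
      rw [hxeq, hF0, zero_mul] at hk
      set x := Real.sqrt (1 - α₁ ^ 2 * h) with hxdef
      have hxsq : x ^ 2 = 1 - α₁ ^ 2 * h := Real.sq_sqrt hv1.le
      simp only [eval_sub, eval_mul, eval_pow, eval_add]
      rw [hu₁ev, ← hxsq]
      linear_combination (-((A.eval h + B.eval h) * x - Cc.eval h * x ^ 2)) * hk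
  · -- nondegenerate case : α₁² ≠ α₂²
    set W : ℝ[X] := Cc ^ 2 * (u₁ * u₂) - A ^ 2 * u₂ - B ^ 2 * u₁ with hWdef
    have hdW : W.natDegree ≤ 2 * s + 2 * (m₁ + m₂) - 3 := by
      have h1 : (Cc ^ 2 * (u₁ * u₂)).natDegree ≤
          2 * ((2 * s + 1 - m₁ - m₂) / 2 + ((m₁ - 1) * 1 + (m₂ - 1) * 1)) + (1 + 1) :=
        hmd _ _ _ _ (hpd _ _ _ hdCc) (hmd _ _ _ _ hdu₁.le hdu₂.le)
      have h2 : (A ^ 2 * u₂).natDegree ≤ 2 * ((m₁ - 1 + s) + (m₂ - 1) * 1) + 1 :=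
        hmd _ _ _ _ (hpd _ _ _ hdA) hdu₂.le
      have h3 : (B ^ 2 * u₁).natDegree ≤ 2 * ((m₂ - 1 + s) + (m₁ - 1) * 1) + 1 :=
        hmd _ _ _ _ (hpd _ _ _ hdB) hdu₁.le
      refine ((natDegree_sub_le _ _).trans (max_le ((natDegree_sub_le _ _).trans
        (max_le (h1.trans ?_) (h2.trans ?_))) (h3.trans ?_))) <;> omega
    refine ⟨W ^ 2 - C 4 * (A * B) ^ 2 * (u₁ * u₂), ?_, ?_, ?_⟩
    · -- nonzero
      intro hg
      have hgeq : W ^ 2 = C 4 * (A * B) ^ 2 * (u₁ * u₂) := by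
        rwa [sub_eq_zero] at hg
      set t : ℝ := 1 / α₁ ^ 2 with htdef
      have hu₁fac : u₁ = C (-(α₁ ^ 2)) * (X - C t) := by
        have hc : -(α₁ ^ 2) * t = -1 := by
          rw [htdef]; field_simp
        rw [hu₁def, mul_sub, ← C_mul, hc]
        simp
      have hu₂t : u₂.eval t ≠ 0 := by
        rw [hu₂ev]
        intro hzero
        apply hdeg
        have : α₂ ^ 2 * t = 1 := by linarith
        rw [htdef] at this
        field_simp at this
        linarith
      have hct : (C (-(α₁ ^ 2)) : ℝ[X]).eval t ≠ 0 := by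
        simp [ha1.ne']
      have hC4 : (C 4 : ℝ[X]) = C 2 * C 2 := by
        rw [← C_mul]; norm_num
      have hmaineq : W * W = (C 2 * (A * B)) * (C 2 * (A * B)) *
          (C (-(α₁ ^ 2)) * ((X - C t) * u₂)) := by
        have h1 : W * W = C 4 * (A * B) ^ 2 * (u₁ * u₂) := by
          rw [← pow_two, hgeq]
        rw [h1, hC4, hu₁fac]; ring
      have hY := aux_parity2 t W (C 2 * (A * B)) u₂ (C (-(α₁ ^ 2))) hu₂t hct hmaineq
      have hC2 : (C 2 : ℝ[X]) ≠ 0 := by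
        intro hc; have := congrArg (eval 0) hc; simp at this
      have hAB0 : A * B = 0 := (mul_eq_zero.mp hY).resolve_left hC2
      have hW0 : W = 0 := by
        rw [hAB0] at hgeq
        rw [zero_pow (by norm_num), mul_zero, zero_mul] at hgeq
        exact pow_eq_zero_iff (n := 2) (by norm_num) |>.mp hgeq
      have hWex : Cc ^ 2 * (u₁ * u₂) - A ^ 2 * u₂ - B ^ 2 * u₁ = 0 := hWdef.symm.trans hW0
      have hallzero : P = 0 ∧ Q = 0 ∧ R = 0 := by
        rcases mul_eq_zero.mp hAB0 with hA0 | hB0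
        · have hP0 : P = 0 :=
            (mul_eq_zero.mp (hAdef.symm.trans hA0)).resolve_right (pow_ne_zero _ hu₂0)
          have h1 : u₁ * (Cc ^ 2 * u₂ - B ^ 2) = 0 := by
            linear_combination hWex + (A * u₂) * hA0
          have h2 : Cc ^ 2 * u₂ - B ^ 2 = 0 := (mul_eq_zero.mp h1).resolve_left hu₁0
          obtain ⟨hCc0, hB0'⟩ := aux_parity (α₂ ^ 2) ha2.ne' Cc B
            (by rw [← hu₂def]; linear_combination h2)
          have hR0 : R = 0 :=
            (mul_eq_zero.mp (hCcdef.symm.trans hCc0)).resolve_right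
              (mul_ne_zero (pow_ne_zero _ hu₁0) (pow_ne_zero _ hu₂0))
          have hQ0 : Q = 0 :=
            (mul_eq_zero.mp (hBdef.symm.trans hB0')).resolve_right (pow_ne_zero _ hu₁0)
          exact ⟨hP0, hQ0, hR0⟩
        · have hQ0 : Q = 0 :=
            (mul_eq_zero.mp (hBdef.symm.trans hB0)).resolve_right (pow_ne_zero _ hu₁0)
          have h1 : u₂ * (Cc ^ 2 * u₁ - A ^ 2) = 0 := by
            linear_combination hWex + (B * u₁) * hB0
          have h2 : Cc ^ 2 * u₁ - A ^ 2 = 0 := (mul_eq_zero.mp h1).resolve_left hu₂0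
          obtain ⟨hCc0, hA0'⟩ := aux_parity (α₁ ^ 2) ha1.ne' Cc A
            (by rw [← hu₁def]; linear_combination h2)
          have hR0 : R = 0 :=
            (mul_eq_zero.mp (hCcdef.symm.trans hCc0)).resolve_right
              (mul_ne_zero (pow_ne_zero _ hu₁0) (pow_ne_zero _ hu₂0))
          have hP0 : P = 0 :=
            (mul_eq_zero.mp (hAdef.symm.trans hA0')).resolve_right (pow_ne_zero _ hu₂0)
          exact ⟨hP0, hQ0, hR0⟩
      obtain ⟨hP0, hQ0, hR0⟩ := hallzero
      obtain ⟨h0, hh0, hFne⟩ := hne0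
      apply hFne
      rw [hF h0 hh0, hP0, hQ0, hR0]
      simp
    · -- degree bound
      refine (natDegree_sub_le _ _).trans (max_le ?_ ?_)
      · exact (hpd _ 2 _ hdW).trans (by omega)
      · refine (hmd _ _ (0 + 2 * (((m₁ - 1 + s) + (m₂ - 1) * 1) + ((m₂ - 1 + s) + (m₁ - 1) * 1)))
          (1 + 1) (hmd _ _ _ _ (natDegree_C _).le (hpd _ _ _ (hmd _ _ _ _ hdA hdB)))
          (hmd _ _ _ _ hdu₁.le hdu₂.le)).trans ?_
        omega
    · -- zeros of F are roots
      intro h hmem hF0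
      have hk := key h hmem
      rw [hF0, zero_mul] at hk
      obtain ⟨hv1, hv2⟩ := hv h hmem
      set x₁ := Real.sqrt (1 - α₁ ^ 2 * h) with hx₁def
      set x₂ := Real.sqrt (1 - α₂ ^ 2 * h) with hx₂def
      have hx₁sq : x₁ ^ 2 = 1 - α₁ ^ 2 * h := Real.sq_sqrt hv1.le
      have hx₂sq : x₂ ^ 2 = 1 - α₂ ^ 2 * h := Real.sq_sqrt hv2.le
      have hWev : W.eval h = Cc.eval h ^ 2 * (x₁ ^ 2 * x₂ ^ 2)
          - A.eval h ^ 2 * x₂ ^ 2 - B.eval h ^ 2 * x₁ ^ 2 := by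
        rw [hWdef]
        simp only [eval_sub, eval_mul, eval_pow]
        rw [hu₁ev, hu₂ev, ← hx₁sq, ← hx₂sq]
      simp only [eval_sub, eval_mul, eval_pow, eval_C]
      rw [hWev, hu₁ev, hu₂ev, ← hx₁sq, ← hx₂sq]
      linear_combination (-((-(A.eval h * x₂) - B.eval h * x₁ + Cc.eval h * (x₁ * x₂)) *
        ((A.eval h * x₂ - B.eval h * x₁ - Cc.eval h * (x₁ * x₂)) *
          (-(A.eval h * x₂) + B.eval h * x₁ - Cc.eval h * (x₁ * x₂))))) * hk
end
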